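/- arXiv:1610.04203 — 3 statements merged into one kernel-verified Lean document; each statement's English description precedes it below -/
import Mathlib

section
/- In a homogeneous network (L_i = L, X_i = X, ρ_i = ρ for all i) with N ≥ 2 nodes that is sufficiently energy-constrained, i.e., N·ρ ≤ X + (N−1)·L, the optimal value of problem (P2) equals N·(N−1)·ρ/(X + (N−1)·L), and it is attained at the symmetric point β_i* = ρ/(X + (N−1)·L) and α_i* = (N−1)·β_i* for all i. -/
open Finset

/-- Feasibility for problem (P2) (homogeneous parameters `L`, `X`, `ρ`). -/
def P2Feasible (N : ℕ) (L X ρ : ℝ) (α β : Fin N → ℝ) : Prop :=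
  (∀ i, α i ∈ Set.Icc (0 : ℝ) 1) ∧ (∀ i, β i ∈ Set.Icc (0 : ℝ) 1) ∧
  (∀ i, α i * L + β i * X ≤ ρ) ∧
  (∀ i, α i + β i ≤ 1) ∧ (∑ i, β i ≤ 1) ∧
  (∀ i, α i ≤ ∑ j ∈ univ.erase i, β j)

/-- In a sufficiently energy-constrained homogeneous network
(`N·ρ ≤ X + (N−1)·L`), the optimal value of (P2) equals
`N·(N−1)·ρ/(X + (N−1)·L)`, attained at the symmetric point
`β_i* = ρ/(X + (N−1)·L)`, `α_i* = (N−1)·β_i*`. -/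
theorem homogeneous_oracle_groupput (N : ℕ) (hN : 2 ≤ N) (L X ρ : ℝ)
    (hL : 0 < L) (hX : 0 < X) (hρ : 0 < ρ)
    (hcon : (N : ℝ) * ρ ≤ X + ((N : ℝ) - 1) * L) :
    IsGreatest {v : ℝ | ∃ α β : Fin N → ℝ, P2Feasible N L X ρ α β ∧ v = ∑ i, α i}
        ((N : ℝ) * ((N : ℝ) - 1) * ρ / (X + ((N : ℝ) - 1) * L))
    ∧ P2Feasible N L X ρ
        (fun _ => ((N : ℝ) - 1) * (ρ / (X + ((N : ℝ) - 1) * L)))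
        (fun _ => ρ / (X + ((N : ℝ) - 1) * L))
    ∧ (∑ _i : Fin N, ((N : ℝ) - 1) * (ρ / (X + ((N : ℝ) - 1) * L)))
        = (N : ℝ) * ((N : ℝ) - 1) * ρ / (X + ((N : ℝ) - 1) * L) := by
  have hN1 : (1:ℝ) ≤ (N:ℝ) - 1 := by
    have : (2:ℝ) ≤ (N:ℝ) := by exact_mod_cast hN
    linarith
  set D : ℝ := X + ((N : ℝ) - 1) * L with hDdef
  have hD : 0 < D := by nlinarith
  have hb0 : 0 < ρ / D := div_pos hρ hD
  have hNb : (N:ℝ) * (ρ / D) ≤ 1 := by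
    rw [mul_div_assoc']
    exact (div_le_one hD).2 hcon
  have hcardE : ∀ i : Fin N, ((univ.erase i).card : ℝ) = (N:ℝ) - 1 := by
    intro i
    rw [card_erase_of_mem (mem_univ i), card_univ, Fintype.card_fin]
    have h1 : 1 ≤ N := le_trans (by norm_num) hN
    push_cast [Nat.cast_sub h1]
    ring
  have hsumE : ∀ i : Fin N,
      (∑ _j ∈ univ.erase i, ρ / D) = ((N:ℝ) - 1) * (ρ / D) := by
    intro i
    rw [Finset.sum_const, nsmul_eq_mul, hcardE i]
  have hfeas : P2Feasible N L X ρ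
      (fun _ => ((N : ℝ) - 1) * (ρ / D)) (fun _ => ρ / D) := by
    refine ⟨?_, ?_, ?_, ?_, ?_, ?_⟩
    · intro i
      constructor
      · positivity
      · nlinarith [hb0]
    · intro i
      constructor
      · exact le_of_lt hb0
      · nlinarith [hb0]
    · intro i
      have : ((N : ℝ) - 1) * (ρ / D) * L + ρ / D * X = ρ := by
        field_simp
        ring
      rw [this]
    · intro i
      nlinarith [hb0]
    · rw [Finset.sum_const, card_univ, Fintype.card_fin, nsmul_eq_mul]
      exact hNb
    · intro i
      rw [hsumE i]
  have hsum : (∑ _i : Fin N, ((N : ℝ) - 1) * (ρ / D))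
      = (N : ℝ) * ((N : ℝ) - 1) * ρ / D := by
    rw [Finset.sum_const, card_univ, Fintype.card_fin, nsmul_eq_mul]
    field_simp
  refine ⟨⟨⟨_, _, hfeas, hsum.symm⟩, ?_⟩, hfeas, hsum⟩
  rintro v ⟨α, β, ⟨hα, hβ, hcons, hab, hS, hor⟩, hv⟩
  set S : ℝ := ∑ i, β i with hSdef
  set A : ℝ := ∑ i, α i with hAdef
  have h1 : A ≤ ((N:ℝ) - 1) * S := by
    have : A ≤ ∑ i, (S - β i) := by
      apply Finset.sum_le_sum
      intro i _
      have := hor i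
      rwa [Finset.sum_erase_eq_sub (mem_univ i)] at this
    rw [Finset.sum_sub_distrib, Finset.sum_const, card_univ, Fintype.card_fin,
      nsmul_eq_mul] at this
    linarith
  have h2 : A * L + S * X ≤ (N:ℝ) * ρ := by
    have : ∑ i, (α i * L + β i * X) ≤ ∑ _i : Fin N, ρ :=
      Finset.sum_le_sum fun i _ => hcons i
    rw [Finset.sum_add_distrib, ← Finset.sum_mul, ← Finset.sum_mul,
      Finset.sum_const, card_univ, Fintype.card_fin, nsmul_eq_mul] at this
    linarith
  have hgoal : A * D ≤ (N:ℝ) * ((N:ℝ) - 1) * ρ := by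
    by_cases hS' : S * D ≤ (N:ℝ) * ρ
    · nlinarith [h1, hS', hD]
    · push_neg at hS'
      nlinarith [h2, hS'.le, hL, hX]
  have : v * D ≤ ((N:ℝ) * ((N:ℝ) - 1) * ρ / D) * D := by
    rw [div_mul_cancel₀ _ (ne_of_gt hD)]
    rw [hv]; exact hgoal
  exact le_of_mul_le_mul_right this hD
end

section
/- In a homogeneous network (L_i = L, X_i = X, ρ_i = ρ for all i) with N ≥ 2 nodes that is sufficiently energy-constrained, i.e., N·ρ ≤ X + L, the optimal value of problem (P3) equals N·ρ/(X + L), and it is attained at the symmetric point α_i* = β_i* = ρ/(X + L) for all i with χ_{i,j} = β*/(N−1) for all i ≠ j. -/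
open Finset

/-- Feasibility for problem (P3) (homogeneous parameters `L`, `X`, `ρ`). -/
def P3Feasible (N : ℕ) (L X ρ : ℝ) (α β : Fin N → ℝ) (χ : Fin N → Fin N → ℝ) : Prop :=
  (∀ i, α i ∈ Set.Icc (0 : ℝ) 1) ∧ (∀ i, β i ∈ Set.Icc (0 : ℝ) 1) ∧
  (∀ i j, i ≠ j → 0 ≤ χ i j) ∧
  (∀ i, α i * L + β i * X ≤ ρ) ∧
  (∀ i, α i + β i ≤ 1) ∧ (∑ i, β i ≤ 1) ∧
  (∀ i, β i ≤ ∑ j ∈ univ.erase i, χ i j) ∧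
  (∀ j, α j = ∑ i ∈ univ.erase j, χ i j)

/-- In a sufficiently energy-constrained homogeneous network
(`N·ρ ≤ X + L`), the optimal value of (P3) equals `N·ρ/(X + L)`, attained at the
symmetric point `α_i* = β_i* = ρ/(X + L)` with `χ_{i,j} = β*/(N−1)` for `i ≠ j`. -/
theorem homogeneous_oracle_anyput (N : ℕ) (hN : 2 ≤ N) (L X ρ : ℝ)
    (hL : 0 < L) (hX : 0 < X) (hρ : 0 < ρ)
    (hcon : (N : ℝ) * ρ ≤ X + L) :
    IsGreatest {v : ℝ | ∃ α β : Fin N → ℝ, ∃ χ : Fin N → Fin N → ℝ,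
        P3Feasible N L X ρ α β χ ∧ v = ∑ i, β i}
        ((N : ℝ) * ρ / (X + L))
    ∧ P3Feasible N L X ρ
        (fun _ => ρ / (X + L)) (fun _ => ρ / (X + L))
        (fun _ _ => (ρ / (X + L)) / ((N : ℝ) - 1))
    ∧ (∑ _i : Fin N, ρ / (X + L)) = (N : ℝ) * ρ / (X + L) := by
  have hXL : 0 < X + L := by linarith
  have hN2 : (2 : ℝ) ≤ (N : ℝ) := by exact_mod_cast hN
  have hNρ : 2 * ρ ≤ X + L := by nlinarith
  have hρXL : ρ ≤ X + L := by nlinarith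
  set b : ℝ := ρ / (X + L) with hbdef
  have hb0 : 0 ≤ b := by positivity
  have hN1 : (0 : ℝ) < (N : ℝ) - 1 := by linarith
  -- sum over erase: cardinality
  have hcard : ∀ i : Fin N, (univ.erase i).card = N - 1 := by
    intro i
    rw [card_erase_of_mem (mem_univ i), card_univ, Fintype.card_fin]
  have hcast : ((N - 1 : ℕ) : ℝ) = (N : ℝ) - 1 := by
    have : 1 ≤ N := by omega
    push_cast [Nat.cast_sub this]; ring
  have hsumχ : ∀ i : Fin N, ∑ j ∈ univ.erase i, b / ((N : ℝ) - 1) = b := by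
    intro i
    rw [Finset.sum_const, hcard, nsmul_eq_mul, hcast]
    field_simp
  have hsumb : (∑ _i : Fin N, b) = (N : ℝ) * ρ / (X + L) := by
    rw [Finset.sum_const, card_univ, Fintype.card_fin, nsmul_eq_mul, hbdef, mul_div_assoc]
  have hfeas : P3Feasible N L X ρ (fun _ => b) (fun _ => b)
      (fun _ _ => b / ((N : ℝ) - 1)) := by
    have hb1 : b ≤ 1 := by rw [hbdef, div_le_one hXL]; linarith
    have hbb : b + b ≤ 1 := by
      rw [hbdef, ← add_div, div_le_one hXL]; linarith
    refine ⟨fun i => ⟨hb0, hb1⟩, fun i => ⟨hb0, hb1⟩, ?_, ?_, fun i => hbb, ?_, ?_, ?_⟩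
    · intro i j _
      exact div_nonneg hb0 (le_of_lt hN1)
    · intro i
      have : b * L + b * X = ρ := by
        rw [hbdef]; field_simp; ring
      simp only [this]; exact le_refl ρ
    · simp only []; rw [hsumb, div_le_one hXL]; linarith
    · intro i; simp only []; rw [hsumχ i]
    · intro j; simp only []; rw [hsumχ j]
  refine ⟨⟨⟨fun _ => b, fun _ => b, fun _ _ => b / ((N : ℝ) - 1), hfeas, hsumb.symm⟩, ?_⟩,
    hfeas, hsumb⟩
  rintro v ⟨α, β, χ, ⟨hα, hβ, hχ, hpow, hab, hsum1, hβχ, hαχ⟩, rfl⟩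
  -- swap double sums
  have hswap : ∑ i, ∑ j ∈ univ.erase i, χ i j = ∑ j, ∑ i ∈ univ.erase j, χ i j := by
    have e1 : ∀ i : Fin N, ∑ j ∈ univ.erase i, χ i j = (∑ j, χ i j) - χ i i :=
      fun i => Finset.sum_erase_eq_sub (mem_univ i)
    have e2 : ∀ j : Fin N, ∑ i ∈ univ.erase j, χ i j = (∑ i, χ i j) - χ j j :=
      fun j => Finset.sum_erase_eq_sub (mem_univ j)
    simp only [e1, e2, Finset.sum_sub_distrib]
    rw [Finset.sum_comm]
  have h1 : ∑ i, β i ≤ ∑ i, α i := by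
    calc ∑ i, β i ≤ ∑ i, ∑ j ∈ univ.erase i, χ i j := Finset.sum_le_sum fun i _ => hβχ i
    _ = ∑ j, ∑ i ∈ univ.erase j, χ i j := hswap
    _ = ∑ j, α j := Finset.sum_congr rfl fun j _ => (hαχ j).symm
  have h2 : (∑ i, α i) * L + (∑ i, β i) * X ≤ (N : ℝ) * ρ := by
    have := Finset.sum_le_sum fun i (_ : i ∈ (univ : Finset (Fin N))) => hpow i
    rw [Finset.sum_add_distrib, ← Finset.sum_mul, ← Finset.sum_mul,
      Finset.sum_const, card_univ, Fintype.card_fin, nsmul_eq_mul] at this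
    exact this
  rw [le_div_iff₀ hXL]
  nlinarith [h1, h2]
end

section
/- For every integer N ≥ 2, the supremum of Σ_i α_i over all α, β ∈ [0,1]^N satisfying α_i + β_i ≤ 1 for all i, Σ_i β_i ≤ 1, and α_i ≤ Σ_{j≠i} β_j for all i, equals N − 1. (Without energy constraints, the oracle groupput is N − 1, achieved when one node always transmits and the remaining N − 1 nodes always listen.) -/
open Finset

/-- Without energy constraints, the supremum of the groupput
`Σ_i α_i` over `α, β ∈ [0,1]^N` with `α_i + β_i ≤ 1`, `Σ_i β_i ≤ 1`, and
`α_i ≤ Σ_{j≠i} β_j` equals `N − 1`. -/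
theorem unconstrained_oracle_groupput (N : ℕ) (hN : 2 ≤ N) :
    sSup {v : ℝ | ∃ α β : Fin N → ℝ,
        (∀ i, α i ∈ Set.Icc (0 : ℝ) 1) ∧ (∀ i, β i ∈ Set.Icc (0 : ℝ) 1) ∧
        (∀ i, α i + β i ≤ 1) ∧ (∑ i, β i ≤ 1) ∧
        (∀ i, α i ≤ ∑ j ∈ univ.erase i, β j) ∧
        v = ∑ i, α i}
      = (N : ℝ) - 1 := by
  have hNpos : 0 < N := by omega
  have hub : ∀ v ∈ {v : ℝ | ∃ α β : Fin N → ℝ,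
        (∀ i, α i ∈ Set.Icc (0 : ℝ) 1) ∧ (∀ i, β i ∈ Set.Icc (0 : ℝ) 1) ∧
        (∀ i, α i + β i ≤ 1) ∧ (∑ i, β i ≤ 1) ∧
        (∀ i, α i ≤ ∑ j ∈ univ.erase i, β j) ∧
        v = ∑ i, α i}, v ≤ (N : ℝ) - 1 := by
    rintro v ⟨α, β, hα, hβ, _, hsum, hlisten, rfl⟩
    have hβ0 : ∀ i, 0 ≤ β i := fun i => (hβ i).1
    have h1 : ∑ i, α i ≤ ∑ i, ∑ j ∈ univ.erase i, β j :=
      Finset.sum_le_sum fun i _ => hlisten i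
    have h2 : ∀ i : Fin N, ∑ j ∈ univ.erase i, β j = (∑ j, β j) - β i := by
      intro i
      rw [Finset.sum_erase_eq_sub (Finset.mem_univ i)]
    have h3 : ∑ i, ∑ j ∈ univ.erase i, β j = (N : ℝ) * (∑ j, β j) - ∑ i, β i := by
      simp [h2, Finset.sum_sub_distrib, Finset.card_univ]
    calc ∑ i, α i ≤ (N : ℝ) * (∑ j, β j) - ∑ i, β i := by rw [← h3]; exact h1
      _ = ((N : ℝ) - 1) * (∑ j, β j) := by ring
      _ ≤ ((N : ℝ) - 1) * 1 := by
          apply mul_le_mul_of_nonneg_left hsum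
          have : (2 : ℝ) ≤ N := by exact_mod_cast hN
          linarith
      _ = (N : ℝ) - 1 := mul_one _
  apply le_antisymm
  · apply Real.sSup_le hub
    have : (2 : ℝ) ≤ N := by exact_mod_cast hN
    linarith
  · apply le_csSup ⟨(N : ℝ) - 1, hub⟩
    refine ⟨fun i => if i = ⟨0, hNpos⟩ then 0 else 1,
            fun i => if i = ⟨0, hNpos⟩ then 1 else 0, ?_, ?_, ?_, ?_, ?_, ?_⟩
    · intro i; by_cases h : i = ⟨0, hNpos⟩ <;> simp [h]
    · intro i; by_cases h : i = ⟨0, hNpos⟩ <;> simp [h]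
    · intro i; by_cases h : i = ⟨0, hNpos⟩ <;> simp [h]
    · simp
    · intro i
      by_cases h : i = ⟨0, hNpos⟩
      · simp only [h, if_pos rfl]
        exact Finset.sum_nonneg fun j _ => by positivity
      · simp only [if_neg h]
        have hmem : (⟨0, hNpos⟩ : Fin N) ∈ univ.erase i :=
          Finset.mem_erase.2 ⟨fun hh => h hh.symm, Finset.mem_univ _⟩
        have := Finset.single_le_sum (f := fun j => if j = (⟨0, hNpos⟩ : Fin N) then (1:ℝ) else 0)
          (fun j _ => by positivity) hmem
        simpa using this
    · have : ∀ i : Fin N, (if i = (⟨0, hNpos⟩ : Fin N) then (0:ℝ) else 1)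
          = 1 - (if i = (⟨0, hNpos⟩ : Fin N) then (1:ℝ) else 0) := by
        intro i; split <;> norm_num
      rw [Finset.sum_congr rfl fun i _ => this i, Finset.sum_sub_distrib]
      simp [Finset.card_univ]
end
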